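/- arXiv:math/0604549 — 3 statements merged into one kernel-verified Lean document; each statement's English description precedes it below -/
import Mathlib

section
/- For all b ∈ B and x, x' ∈ X one has ∂(x'·x·δ⁻¹·(b·δ)) = ∂(x')·∂(x); consequently the composite (x'·x·δ⁻¹·(b·δ), b) of the arrows (x, b): b → ∂(x)·b and (x', ∂(x)·b): ∂(x)·b → ∂(x')·∂(x)·b is again an arrow from b to ∂(x')·∂(x)·b. -/
/-- STATEMENT 11: For all `b ∈ B` and `x, x' ∈ X` one has
`∂(x' * x * δ⁻¹ * (b • δ)) = ∂ x' * ∂ x`; consequently the composite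
`(x' * x * δ⁻¹ * (b • δ), b)` of the arrows `(x, b) : b → ∂ x * b` and
`(x', ∂ x * b) : ∂ x * b → ∂ x' * ∂ x * b` is again an arrow from `b` to
`∂ x' * ∂ x * b`. -/
theorem boundary_of_composite
    (B X : Type*) [Group B] [Group X]
    (d : X →* B) (act : B →* MulAut X)
    (equivariance : ∀ (b : B) (x : X), d (act b x) = b * d x * b⁻¹)
    (peiffer : ∀ x x' : X, act (d x) x' = x * x' * x⁻¹)
    (δ : X) (hδ : d δ = 1) :
    ∀ (b : B) (x x' : X),
      d (x' * x * δ⁻¹ * act b δ) = d x' * d x ∧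
      d (x' * x * δ⁻¹ * act b δ) * b = d x' * (d x * b) := by
  intro b x x'
  have h1 : d (x' * x * δ⁻¹ * act b δ) = d x' * d x := by
    simp [map_mul, equivariance, hδ]
  exact ⟨h1, by rw [h1, mul_assoc]⟩
end

section
/- The composition of arrows is associative: for all b ∈ B and x, x', x'' ∈ X, composing (x'', ∂(x')·∂(x)·b) with the composite of (x', ∂(x)·b) and (x, b) equals composing the composite of (x'', ∂(x')·∂(x)·b) and (x', ∂(x)·b) with (x, b); explicitly, x''·(x'·x·δ⁻¹·(b·δ))·δ⁻¹·(b·δ) = (x''·x'·δ⁻¹·((∂(x)·b)·δ))·x·δ⁻¹·(b·δ). -/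
/-- STATEMENT 12: The composition of arrows is associative: for all `b ∈ B` and
`x, x', x'' ∈ X`, composing `(x'', ∂ x' * ∂ x * b)` with the composite of
`(x', ∂ x * b)` and `(x, b)` equals composing the composite of
`(x'', ∂ x' * ∂ x * b)` and `(x', ∂ x * b)` with `(x, b)`; explicitly,
`x'' * (x' * x * δ⁻¹ * (b • δ)) * δ⁻¹ * (b • δ)
  = (x'' * x' * δ⁻¹ * ((∂ x * b) • δ)) * x * δ⁻¹ * (b • δ)`. -/
theorem composition_assoc
    (B X : Type*) [Group B] [Group X]
    (d : X →* B) (act : B →* MulAut X)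
    (equivariance : ∀ (b : B) (x : X), d (act b x) = b * d x * b⁻¹)
    (peiffer : ∀ x x' : X, act (d x) x' = x * x' * x⁻¹)
    (δ : X) (hδ : d δ = 1) :
    ∀ (b : B) (x x' x'' : X),
      x'' * (x' * x * δ⁻¹ * act b δ) * δ⁻¹ * act b δ
        = (x'' * x' * δ⁻¹ * act (d x * b) δ) * x * δ⁻¹ * act b δ := by
  intro b x x' x''
  have hcent : ∀ y : X, δ * y = y * δ := by
    intro y
    have h := peiffer δ y
    rw [hδ, map_one, MulAut.one_apply] at h
    exact mul_inv_eq_iff_eq_mul.mp h.symm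
  have hp : act (d x * b) δ = x * act b δ * x⁻¹ := by
    rw [map_mul, MulAut.mul_apply, peiffer]
  rw [hp]
  have hx : δ⁻¹ * x = x * δ⁻¹ := by
    rw [inv_mul_eq_iff_eq_mul, hcent, mul_assoc, inv_mul_cancel, mul_one]
  calc x'' * (x' * x * δ⁻¹ * act b δ) * δ⁻¹ * act b δ
      = x'' * x' * (x * δ⁻¹) * act b δ * δ⁻¹ * act b δ := by group
    _ = x'' * x' * (δ⁻¹ * x) * act b δ * δ⁻¹ * act b δ := by rw [hx]
    _ = x'' * x' * δ⁻¹ * (x * act b δ * x⁻¹) * x * δ⁻¹ * act b δ := by group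
end

section
/- In the semidirect product X ⋊ B formed with the given action, conjugation by the element (δ, 1) carries the composite of (x, b) with the identity arrow (1, b) to (x, b) itself: for all b ∈ B and x ∈ X, (δ, 1)·(x·δ⁻¹·(b·δ), b)·(δ, 1)⁻¹ = (x, b). Thus (δ, 1) realizes the unit isomorphism of the pseudo-category in groups associated to (∂, δ, the action). -/
/-- STATEMENT 13: In the semidirect product `X ⋊ B` formed with the given action,
conjugation by the element `(δ, 1)` carries the composite of `(x, b)` with the
identity arrow `(1, b)` to `(x, b)` itself: for all `b ∈ B` and `x ∈ X`,
`(δ, 1) * (x * δ⁻¹ * (b • δ), b) * (δ, 1)⁻¹ = (x, b)`.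
Thus `(δ, 1)` realizes the unit isomorphism of the pseudo-category in groups
associated to `(∂, δ, the action)`. -/
theorem delta_realizes_unit_isomorphism
    (B X : Type*) [Group B] [Group X]
    (d : X →* B) (act : B →* MulAut X)
    (equivariance : ∀ (b : B) (x : X), d (act b x) = b * d x * b⁻¹)
    (peiffer : ∀ x x' : X, act (d x) x' = x * x' * x⁻¹)
    (δ : X) (hδ : d δ = 1) :
    ∀ (b : B) (x : X),
      (⟨δ, 1⟩ : X ⋊[act] B) * ⟨x * δ⁻¹ * act b δ, b⟩ * (⟨δ, 1⟩ : X ⋊[act] B)⁻¹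
        = ⟨x, b⟩ := by
  intro b x
  have hc : δ * x * δ⁻¹ = x := by
    have := peiffer δ x
    rw [hδ] at this
    simpa using this.symm
  ext
  · simp only [SemidirectProduct.mul_left, SemidirectProduct.inv_left,
      SemidirectProduct.inv_right, map_one, map_inv, map_mul, MulAut.one_apply,
      mul_one, inv_one, one_mul, SemidirectProduct.mul_right]
    rw [show δ * (x * δ⁻¹ * act b δ) * (act b δ)⁻¹ = δ * x * δ⁻¹ by group]
    exact hc
  · simp only [SemidirectProduct.mul_right, SemidirectProduct.inv_right]
    group
end
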